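/- Let P = N(μ, τ_P²) and Q = N(μ, τ_Q²) with τ_P² ≠ τ_Q², and let (X_i)_{i≥1} be i.i.d. with distribution P. Then the cumulative Hyvärinen score difference Σ_{i=1}^n [S_H(X_i, Q) − S_H(X_i, P)] tends to +∞ almost surely as n → ∞; i.e., model selection by minimum cumulative Hyvärinen score consistently favours the true model P. -/

import Mathlib

open MeasureTheory ProbabilityTheory NNReal Filter

noncomputable def hyvScore (q : ℝ → ℝ) (x : ℝ) : ℝ :=
  2 * deriv (deriv (fun y => Real.log (q y))) x
    + (deriv (fun y => Real.log (q y)) x) ^ 2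

open Real in
lemma log_gaussianPDFReal (μ : ℝ) {v : ℝ≥0} (hv : 0 < v) :
    (fun y => Real.log (gaussianPDFReal μ v y))
      = fun y => -(y - μ)^2 / (2 * (v:ℝ)) - Real.log (Real.sqrt (2 * π * v)) := by
  have hvpos : (0:ℝ) < v := hv
  have hs : (0:ℝ) < Real.sqrt (2 * π * v) := by
    apply Real.sqrt_pos.mpr; positivity
  funext y
  rw [gaussianPDFReal_def]
  simp only
  rw [Real.log_mul (by positivity) (Real.exp_ne_zero _), Real.log_inv, Real.log_exp]
  ring

open Real in
lemma deriv_log_gaussianPDFReal (μ : ℝ) {v : ℝ≥0} (hv : 0 < v) :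
    deriv (fun y => Real.log (gaussianPDFReal μ v y)) = fun x => (μ - x) / (v:ℝ) := by
  have hvpos : (0:ℝ) < v := hv
  rw [log_gaussianPDFReal μ hv]
  funext x
  have h1 : HasDerivAt (fun y : ℝ => y - μ) 1 x := (hasDerivAt_id x).sub_const μ
  have h2 := (((h1.pow 2).neg.div_const (2 * (v:ℝ))).sub_const
    (Real.log (Real.sqrt (2 * π * v))))
  have h3 : HasDerivAt
      (fun y : ℝ => -(y - μ)^2 / (2 * (v:ℝ)) - Real.log (Real.sqrt (2 * π * v)))
      ((μ - x) / (v:ℝ)) x := by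
    refine h2.congr_deriv ?_
    field_simp
    ring
  exact h3.deriv

lemma deriv2_log_gaussianPDFReal (μ : ℝ) {v : ℝ≥0} (hv : 0 < v) :
    deriv (deriv (fun y => Real.log (gaussianPDFReal μ v y))) = fun _ => -(1 / (v:ℝ)) := by
  rw [deriv_log_gaussianPDFReal μ hv]
  funext x
  have h : HasDerivAt (fun y : ℝ => (μ - y) / (v:ℝ)) (-(1 / (v:ℝ))) x := by
    have := ((hasDerivAt_id x).const_sub μ).div_const (v:ℝ)
    refine this.congr_deriv ?_
    ring
  exact h.deriv

lemma hyvScore_gaussian (μ : ℝ) {v : ℝ≥0} (hv : 0 < v) (x : ℝ) :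
    hyvScore (gaussianPDFReal μ v) x = -2 / (v:ℝ) + (x - μ)^2 / (v:ℝ)^2 := by
  have hvpos : (0:ℝ) < v := hv
  unfold hyvScore
  rw [deriv2_log_gaussianPDFReal μ hv, deriv_log_gaussianPDFReal μ hv]
  rw [div_pow]
  ring

lemma integrable_sq_mul_exp {b : ℝ} (hb : 0 < b) :
    Integrable (fun x : ℝ => x ^ 2 * Real.exp (-b * x ^ 2)) := by
  have h := integrable_rpow_mul_exp_neg_mul_sq hb (s := 2) (by norm_num)
  have : (fun x : ℝ => x ^ (2:ℝ) * Real.exp (-b * x ^ 2))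
      = fun x : ℝ => x ^ 2 * Real.exp (-b * x ^ 2) := by
    funext x
    rw [show ((2:ℝ) = ((2:ℕ):ℝ)) by norm_num, Real.rpow_natCast]
  rwa [this] at h

open Real in
lemma integral_sq_mul_exp {b : ℝ} (hb : 0 < b) :
    ∫ x : ℝ, x ^ 2 * Real.exp (-b * x ^ 2) = b ^ (-(3:ℝ)/2) * Real.sqrt π / 2 := by
  have hint := integrable_sq_mul_exp hb
  have hIoi : ∫ x in Set.Ioi (0:ℝ), x ^ 2 * Real.exp (-b * x ^ 2)
      = b ^ (-(3:ℝ)/2) * Real.sqrt π / 4 := by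
    have h := integral_rpow_mul_exp_neg_mul_rpow (p := 2) (q := 2)
      (by norm_num) (by norm_num) hb
    have he : (fun x : ℝ => x ^ (2:ℝ) * Real.exp (-b * x ^ (2:ℝ)))
        = fun x : ℝ => x ^ 2 * Real.exp (-b * x ^ 2) := by
      funext x
      rw [show ((2:ℝ) = ((2:ℕ):ℝ)) by norm_num, Real.rpow_natCast]
    rw [he] at h
    rw [h]
    have hG : Real.Gamma ((2 + 1) / 2) = Real.sqrt π / 2 := by
      rw [show ((2:ℝ) + 1) / 2 = 1/2 + 1 by norm_num,
        Real.Gamma_add_one (by norm_num), Real.Gamma_one_half_eq]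
      ring
    rw [hG]
    rw [show (-(2 + 1) / 2 : ℝ) = -(3:ℝ)/2 by norm_num]
    ring
  have hIic : ∫ x in Set.Iic (0:ℝ), x ^ 2 * Real.exp (-b * x ^ 2)
      = b ^ (-(3:ℝ)/2) * Real.sqrt π / 4 := by
    have h := integral_comp_neg_Ioi (0:ℝ) (fun x : ℝ => x ^ 2 * Real.exp (-b * x ^ 2))
    simp only [neg_zero, neg_sq] at h
    rw [← h]
    exact hIoi
  rw [← intervalIntegral.integral_Iic_add_Ioi (b := (0:ℝ)) hint.integrableOn hint.integrableOn,
    hIoi, hIic]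
  ring

lemma gaussianPDF_eq_nnreal (μ : ℝ) (v : ℝ≥0) :
    gaussianPDF μ v = fun x => ((Real.toNNReal (gaussianPDFReal μ v x) : ℝ≥0) : ENNReal) := rfl

open Real in
lemma pdf_mul_sq_eq (μ : ℝ) {v : ℝ≥0} (hv : 0 < v) :
    (fun x : ℝ => gaussianPDFReal μ v x * (x - μ)^2)
      = fun x : ℝ => (Real.sqrt (2 * π * v))⁻¹
          * ((x - μ) ^ 2 * Real.exp (-(2 * (v:ℝ))⁻¹ * (x - μ) ^ 2)) := by
  have hvpos : (0:ℝ) < v := hv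
  funext x
  rw [gaussianPDFReal_def]
  simp only
  rw [show -(x - μ)^2 / (2 * (v:ℝ)) = -(2 * (v:ℝ))⁻¹ * (x - μ)^2 by field_simp]
  ring

lemma integrable_sq_gaussianReal (μ : ℝ) {v : ℝ≥0} (hv : 0 < v) :
    Integrable (fun x => (x - μ)^2) (gaussianReal μ v) := by
  have hvpos : (0:ℝ) < v := hv
  rw [gaussianReal_of_var_ne_zero μ hv.ne', gaussianPDF_eq_nnreal,
    integrable_withDensity_iff_integrable_smul
      ((measurable_gaussianPDFReal μ v).real_toNNReal)]
  have hsmul : (fun x : ℝ => (Real.toNNReal (gaussianPDFReal μ v x)) • (x - μ)^2)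
      = fun x : ℝ => gaussianPDFReal μ v x * (x - μ)^2 := by
    funext x
    rw [NNReal.smul_def, smul_eq_mul, Real.coe_toNNReal _ (gaussianPDFReal_nonneg μ v x)]
  rw [hsmul, pdf_mul_sq_eq μ hv]
  have hb : (0:ℝ) < (2 * (v:ℝ))⁻¹ := by positivity
  exact ((integrable_sq_mul_exp hb).comp_sub_right μ).const_mul _

open Real in
lemma integral_sq_gaussianReal (μ : ℝ) {v : ℝ≥0} (hv : 0 < v) :
    ∫ x, (x - μ)^2 ∂(gaussianReal μ v) = (v:ℝ) := by
  have hvpos : (0:ℝ) < v := hv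
  rw [gaussianReal_of_var_ne_zero μ hv.ne', gaussianPDF_eq_nnreal,
    integral_withDensity_eq_integral_smul
      ((measurable_gaussianPDFReal μ v).real_toNNReal)]
  have hsmul : (fun x : ℝ => (Real.toNNReal (gaussianPDFReal μ v x)) • (x - μ)^2)
      = fun x : ℝ => gaussianPDFReal μ v x * (x - μ)^2 := by
    funext x
    rw [NNReal.smul_def, smul_eq_mul, Real.coe_toNNReal _ (gaussianPDFReal_nonneg μ v x)]
  simp only [hsmul]
  rw [pdf_mul_sq_eq μ hv]
  rw [integral_const_mul]
  have hb : (0:ℝ) < (2 * (v:ℝ))⁻¹ := by positivity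
  rw [integral_sub_right_eq_self
    (fun a : ℝ => a ^ 2 * Real.exp (-(2 * (v:ℝ))⁻¹ * a ^ 2)) μ,
    integral_sq_mul_exp hb]
  -- algebra
  have h1 : ((2 * (v:ℝ))⁻¹) ^ (-(3:ℝ)/2) = (2 * (v:ℝ)) * Real.sqrt (2 * (v:ℝ)) := by
    have hx : (0:ℝ) ≤ 2 * (v:ℝ) := by positivity
    rw [Real.inv_rpow hx, ← Real.rpow_neg hx,
      show -(-(3:ℝ)/2) = 1 + 1/2 by norm_num, Real.rpow_add (by positivity),
      Real.rpow_one, ← Real.sqrt_eq_rpow]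
  rw [h1]
  have h2 : Real.sqrt (2 * π * (v:ℝ)) = Real.sqrt (2 * (v:ℝ)) * Real.sqrt π := by
    rw [← Real.sqrt_mul (by positivity)]
    ring_nf
  rw [h2]
  have hs1 : (0:ℝ) < Real.sqrt (2 * (v:ℝ)) := Real.sqrt_pos.mpr (by positivity)
  have hs2 : (0:ℝ) < Real.sqrt π := Real.sqrt_pos.mpr Real.pi_pos
  field_simp

theorem stmt_9 {Ω : Type*} [MeasurableSpace Ω] (μmeas : Measure Ω) [IsProbabilityMeasure μmeas]
    (μ : ℝ) (vP vQ : ℝ≥0) (hP : 0 < vP) (hQ : 0 < vQ) (hne : vP ≠ vQ)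
    (p q : ℝ → ℝ) (hp : p = gaussianPDFReal μ vP) (hq : q = gaussianPDFReal μ vQ)
    (X : ℕ → Ω → ℝ) (hmeas : ∀ i, Measurable (X i))
    (hindep : iIndepFun X μmeas)
    (hident : ∀ i, Measure.map (X i) μmeas = gaussianReal μ vP) :
    ∀ᵐ ω ∂μmeas, Tendsto
      (fun n => ∑ i ∈ Finset.range n, (hyvScore q (X i ω) - hyvScore p (X i ω)))
      atTop atTop := by
  have hvP : (0:ℝ) < vP := hP
  have hvQ : (0:ℝ) < vQ := hQ
  have hnePQ : (vP:ℝ) ≠ (vQ:ℝ) := fun h => hne (NNReal.coe_injective h)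
  set c : ℝ := ((vQ:ℝ)^2)⁻¹ - ((vP:ℝ)^2)⁻¹ with hc
  set d : ℝ := 2 / (vP:ℝ) - 2 / (vQ:ℝ) with hd
  set f : ℝ → ℝ := fun x => c * (x - μ)^2 + d with hfdef
  have hf : ∀ x, hyvScore q x - hyvScore p x = f x := by
    intro x
    rw [hp, hq, hyvScore_gaussian μ hQ, hyvScore_gaussian μ hP]
    simp only [hfdef, hc, hd]
    field_simp
    ring
  have hfmeas : Measurable f := by
    apply Measurable.add _ measurable_const
    exact (((measurable_id.sub_const μ).pow_const 2).const_mul c)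
  -- Y i = f ∘ X i
  set Y : ℕ → Ω → ℝ := fun i ω => f (X i ω) with hY
  have hident' : ∀ i, IdentDistrib (X i) (X 0) μmeas μmeas := fun i =>
    ⟨(hmeas i).aemeasurable, (hmeas 0).aemeasurable, by rw [hident i, hident 0]⟩
  have hYindep : Pairwise (Function.onFun (IndepFun · · μmeas) Y) := by
    intro i j hij
    exact (hindep.comp (fun _ => f) (fun _ => hfmeas)).indepFun hij
  have hYident : ∀ i, IdentDistrib (Y i) (Y 0) μmeas μmeas := fun i =>
    (hident' i).comp hfmeas
  have hfint : Integrable f (gaussianReal μ vP) :=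
    (((integrable_sq_gaussianReal μ hP).const_mul c).add (integrable_const d))
  have hg : AEStronglyMeasurable f (Measure.map (X 0) μmeas) := by
    rw [hident 0]; exact hfint.aestronglyMeasurable
  have hfint' : Integrable f (Measure.map (X 0) μmeas) := by
    rw [hident 0]; exact hfint
  have hYint : Integrable (Y 0) μmeas :=
    (integrable_map_measure hg (hmeas 0).aemeasurable).mp hfint'
  have hmean : μmeas[Y 0] = c * (vP:ℝ) + d := by
    have h1 : μmeas[Y 0] = ∫ x, f x ∂(Measure.map (X 0) μmeas) :=
      (integral_map (hmeas 0).aemeasurable hg).symm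
    rw [h1, hident 0]
    simp only [hfdef]
    rw [integral_add ((integrable_sq_gaussianReal μ hP).const_mul c) (integrable_const d),
      integral_const, integral_const_mul, integral_sq_gaussianReal μ hP]
    simp
  have hmpos : 0 < c * (vP:ℝ) + d := by
    have h2 : c * (vP:ℝ) + d = ((vP:ℝ) - (vQ:ℝ))^2 / ((vP:ℝ) * (vQ:ℝ)^2) := by
      simp only [hc, hd]
      field_simp
      ring
    rw [h2]
    apply div_pos _ (by positivity)
    exact lt_of_le_of_ne (sq_nonneg _)
      (Ne.symm (pow_ne_zero 2 (sub_ne_zero.mpr hnePQ)))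
  have hslln := strong_law_ae Y hYint hYindep hYident
  filter_upwards [hslln] with ω hω
  have hω' : Tendsto (fun n : ℕ => (n:ℝ)⁻¹ * ∑ i ∈ Finset.range n, Y i ω)
      atTop (nhds (c * (vP:ℝ) + d)) := by
    rw [← hmean]
    simpa [smul_eq_mul] using hω
  have h3 : Tendsto (fun n : ℕ =>
      (n:ℝ) * ((n:ℝ)⁻¹ * ∑ i ∈ Finset.range n, Y i ω)) atTop atTop :=
    Tendsto.atTop_mul_pos hmpos tendsto_natCast_atTop_atTop hω'
  have h4 : Tendsto (fun n : ℕ => ∑ i ∈ Finset.range n, Y i ω) atTop atTop := by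
    apply h3.congr'
    filter_upwards [eventually_ge_atTop 1] with n hn
    have hn' : (n:ℝ) ≠ 0 := by positivity
    field_simp
  refine h4.congr fun n => ?_
  exact Finset.sum_congr rfl fun i _ => (hf (X i ω)).symm
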